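/- Let P = conv(u_0, u_1, u_2, u_3) ⊆ ℝ^3 be a full-dimensional lattice simplex with lattice length l(P) ≥ 2, and suppose l_{01} = l_{02} = 3 and l_{03} is odd. Let S = {i ∈ {0, 1, 2} : l_{i3} ≠ 2}. Then the 3-dilations P_{i,3} are defined for all i ∈ S (in particular 3 divides l_{12}, l_{03} ≥ 3, and l_{i3} ≥ 3 for i ∈ S), and P = (⋃_{i∈S} P_{i,3}) ∪ P_{3,2}. -/

import Mathlib

open Finset Pointwise

noncomputable section

/-- The real point corresponding to a lattice point. -/
def toR {n : ℕ} (v : Fin n → ℤ) : Fin n → ℝ := fun x => (v x : ℝ)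

/-- The lattice simplex (as a subset of `ℝ^n`) with the given lattice vertices. -/
def lsimplex {n m : ℕ} (u : Fin m → Fin n → ℤ) : Set (Fin n → ℝ) :=
  convexHull ℝ (Set.range fun i => toR (u i))

/-- The lattice length `l_{ij}` of the edge `u_i u_j`:
the gcd of the coordinates of `u_j - u_i`. -/
def latLen {n m : ℕ} (u : Fin m → Fin n → ℤ) (i j : Fin m) : ℕ :=
  Finset.univ.gcd fun x => (u j x - u i x).natAbs

/-- `r_{ij,k}`: the least nonnegative residue of `l_{ij}` modulo `k`. -/
def rmod {n m : ℕ} (u : Fin m → Fin n → ℤ) (i j : Fin m) (k : ℕ) : ℕ :=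
  latLen u i j % k

/-- The vertices of the `k`-dilation `P_{i,k}`: the vertex `u_i` together with, for `j ≠ i`,
the points `((l_{ij} - r_{ij,k})/l_{ij})·u_j + (r_{ij,k}/l_{ij})·u_i`. -/
def dilVert {n m : ℕ} (u : Fin m → Fin n → ℤ) (i : Fin m) (k : ℕ) (j : Fin m) :
    Fin n → ℝ :=
  if j = i then toR (u i)
  else
    ((((latLen u i j : ℝ) - (rmod u i j k : ℝ)) / (latLen u i j : ℝ)) • toR (u j))
      + (((rmod u i j k : ℝ) / (latLen u i j : ℝ)) • toR (u i))

/-- The `k`-dilation `P_{i,k}`. -/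
def dil {n m : ℕ} (u : Fin m → Fin n → ℤ) (i : Fin m) (k : ℕ) : Set (Fin n → ℝ) :=
  convexHull ℝ (Set.range (dilVert u i k))

/-- The primitive edge vector `ũ_{ij} = (u_j - u_i)/l_{ij}`. -/
def primVec {n m : ℕ} (u : Fin m → Fin n → ℤ) (i j : Fin m) : Fin n → ℝ :=
  (latLen u i j : ℝ)⁻¹ • (toR (u j) - toR (u i))

/-- The translated `k`-dilation `P_{i,k,t} = P_{i,k} + Σ_{j ≠ i} t_j ũ_{ij}`. -/
def dilT {n m : ℕ} (u : Fin m → Fin n → ℤ) (i : Fin m) (k : ℕ) (t : Fin m → ℕ) :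
    Set (Fin n → ℝ) :=
  (fun y => y + ∑ j ∈ Finset.univ.erase i, (t j : ℝ) • primVec u i j) '' dil u i k

lemma latLen_comm {n m : ℕ} (u : Fin m → Fin n → ℤ) (i j : Fin m) :
    latLen u i j = latLen u j i := by
  unfold latLen
  apply Finset.gcd_congr rfl
  intro x _
  rw [← Int.natAbs_neg, neg_sub]

lemma dil_subset {n m : ℕ} (u : Fin m → Fin n → ℤ) (i : Fin m) (k : ℕ)
    (h : ∀ j, j ≠ i → 0 < latLen u i j) : dil u i k ⊆ lsimplex u := by
  apply convexHull_min _ (convex_convexHull ℝ _)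
  rintro y ⟨j, rfl⟩
  by_cases hj : j = i
  · rw [dilVert, if_pos hj]
    exact subset_convexHull ℝ _ (Set.mem_range_self (f := fun i => toR (u i)) i)
  · rw [dilVert, if_neg hj]
    have hl : 0 < (latLen u i j : ℝ) := by exact_mod_cast h j hj
    have hr : (rmod u i j k : ℝ) ≤ (latLen u i j : ℝ) := by
      exact_mod_cast Nat.mod_le _ _
    have hr0 : (0:ℝ) ≤ (rmod u i j k : ℝ) := Nat.cast_nonneg _
    exact (convex_convexHull ℝ _) (subset_convexHull ℝ _ (Set.mem_range_self (f := fun i => toR (u i)) j))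
      (subset_convexHull ℝ _ (Set.mem_range_self (f := fun i => toR (u i)) i))
      (div_nonneg (by linarith) hl.le) (div_nonneg hr0 hl.le)
      (by field_simp; ring)

lemma sum_mem_dil {n : ℕ} (u : Fin 4 → Fin n → ℤ) (i : Fin 4) (k : ℕ)
    (hL : ∀ j, j ≠ i → (rmod u i j k : ℝ) < (latLen u i j : ℝ))
    (lam : Fin 4 → ℝ) (h0 : ∀ j, 0 ≤ lam j) (h1 : ∑ j, lam j = 1)
    (hcond : ∑ j ∈ Finset.univ.erase i,
        lam j * (latLen u i j : ℝ) / ((latLen u i j : ℝ) - (rmod u i j k : ℝ)) ≤ 1) :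
    ∑ j, lam j • toR (u j) ∈ dil u i k := by
  classical
  set c : Fin 4 → ℝ := fun j => (latLen u i j : ℝ) / ((latLen u i j : ℝ) - (rmod u i j k : ℝ))
    with hc
  set μ : Fin 4 → ℝ := fun j =>
    if j = i then 1 - ∑ j' ∈ Finset.univ.erase i, lam j' * c j' else lam j * c j with hμ
  have hcond' : ∑ j' ∈ Finset.univ.erase i, lam j' * c j' ≤ 1 := by
    calc ∑ j' ∈ Finset.univ.erase i, lam j' * c j'
        = ∑ j' ∈ Finset.univ.erase i,
            lam j' * (latLen u i j' : ℝ) / ((latLen u i j' : ℝ) - (rmod u i j' k : ℝ)) := by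
          apply Finset.sum_congr rfl; intro j' _; rw [hc, mul_div_assoc]
      _ ≤ 1 := hcond
  have hlr : ∀ j, j ≠ i → (0:ℝ) < (latLen u i j : ℝ) - (rmod u i j k : ℝ) := by
    intro j hj; have := hL j hj; linarith
  have hl : ∀ j, j ≠ i → (0:ℝ) < (latLen u i j : ℝ) := by
    intro j hj
    have := hL j hj
    have : (0:ℝ) ≤ (rmod u i j k : ℝ) := Nat.cast_nonneg _
    linarith [hL j hj]
  have hμ0 : ∀ j ∈ (Finset.univ : Finset (Fin 4)), 0 ≤ μ j := by
    intro j _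
    by_cases hj : j = i
    · rw [hμ]; simp only [hj, if_true, if_pos]; linarith
    · rw [hμ]; simp only [if_neg hj]
      exact mul_nonneg (h0 j) (div_nonneg (Nat.cast_nonneg _) (hlr j hj).le)
  have herase : ∑ j ∈ Finset.univ.erase i, μ j = ∑ j ∈ Finset.univ.erase i, lam j * c j := by
    apply Finset.sum_congr rfl
    intro j hj
    rw [hμ]; simp only [if_neg (Finset.mem_erase.mp hj).1]
  have hμ1 : ∑ j, μ j = 1 := by
    rw [← Finset.add_sum_erase _ μ (Finset.mem_univ i), herase]
    have : μ i = 1 - ∑ j' ∈ Finset.univ.erase i, lam j' * c j' := by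
      rw [hμ]; simp
    rw [this]; ring
  have key : ∑ j, μ j • dilVert u i k j = ∑ j, lam j • toR (u j) := by
    rw [← Finset.add_sum_erase _ (fun j => μ j • dilVert u i k j) (Finset.mem_univ i),
        ← Finset.add_sum_erase _ (fun j => lam j • toR (u j)) (Finset.mem_univ i)]
    have e1 : ∀ j ∈ Finset.univ.erase i, μ j • dilVert u i k j
        = lam j • toR (u j) + (lam j * c j - lam j) • toR (u i) := by
      intro j hj
      have hji : j ≠ i := (Finset.mem_erase.mp hj).1
      have h1' := hlr j hji
      have h2' := hl j hji
      rw [hμ]; simp only [if_neg hji]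
      rw [dilVert, if_neg hji, smul_add, smul_smul, smul_smul]
      congr 1
      · congr 1
        rw [hc]
        field_simp
      · congr 1
        rw [hc]
        field_simp
        ring
    rw [Finset.sum_congr rfl e1, Finset.sum_add_distrib, ← Finset.sum_smul]
    have hvi : dilVert u i k i = toR (u i) := by rw [dilVert, if_pos rfl]
    have hμi : μ i = 1 - ∑ j' ∈ Finset.univ.erase i, lam j' * c j' := by
      rw [hμ]; simp
    have hlamsum : ∑ j ∈ Finset.univ.erase i, lam j = 1 - lam i := by
      have := Finset.add_sum_erase Finset.univ lam (Finset.mem_univ i)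
      linarith [h1, this]
    have hsum : ∑ j ∈ Finset.univ.erase i, (lam j * c j - lam j)
        = (∑ j ∈ Finset.univ.erase i, lam j * c j) - (1 - lam i) := by
      rw [Finset.sum_sub_distrib, hlamsum]
    rw [hvi, hμi, hsum]
    have : ∀ (T : ℝ) (a b : Fin n → ℝ),
        (1 - T) • b + (a + (T - (1 - lam i)) • b) = lam i • b + a := by
      intro T a b
      rw [add_comm a, ← add_assoc, ← add_smul]
      congr 2
      ring
    exact this _ _ _
  have hmem := Finset.centerMass_mem_convexHull (Finset.univ : Finset (Fin 4)) hμ0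
    (by rw [hμ1]; exact one_pos) (fun j _ => Set.mem_range_self (f := dilVert u i k) j)
  rw [Finset.centerMass_eq_of_sum_1 _ _ hμ1, key] at hmem
  exact hmem

lemma nat_key (L : ℕ) (hodd : L % 2 = 1) (hL : 3 ≤ L) :
    3 * (L % 3) ≤ (L - 1) * (L - L % 3) := by
  rcases (show L % 3 = 0 ∨ L % 3 = 1 ∨ L % 3 = 2 by omega) with h | h | h
  · simp [h]
  · calc 3 * (L % 3) = 3 := by omega
      _ ≤ 6 * 6 := by norm_num
      _ ≤ (L - 1) * (L - L % 3) := Nat.mul_le_mul (by omega) (by omega)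
  · calc 3 * (L % 3) = 6 := by omega
      _ ≤ 4 * 3 := by norm_num
      _ ≤ (L - 1) * (L - L % 3) := Nat.mul_le_mul (by omega) (by omega)

lemma perj (L : ℕ) (hL : 2 ≤ L) (lamj lam3 : ℝ) (h0 : 0 ≤ lamj) (h3 : 0 ≤ lam3)
    (hodd : L % 2 = 1 → 3 ≤ L ∧ ((L : ℝ) - ((L % 3 : ℕ) : ℝ)) * lamj ≤ ((L % 3 : ℕ) : ℝ) * lam3) :
    lamj * (L : ℝ) / ((L : ℝ) - ((L % 2 : ℕ) : ℝ)) ≤ lamj + lam3 / 3 := by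
  rcases Nat.even_or_odd L with h | h
  · have h2 : L % 2 = 0 := Nat.even_iff.mp h
    rw [h2]
    have hne : (L : ℝ) ≠ 0 := Nat.cast_ne_zero.mpr (by omega)
    rw [Nat.cast_zero, sub_zero, mul_div_assoc, div_self hne, mul_one]
    linarith
  · have h2 : L % 2 = 1 := Nat.odd_iff.mp h
    obtain ⟨hL3, hA⟩ := hodd h2
    rw [h2, Nat.cast_one]
    have hL3' : (3 : ℝ) ≤ (L : ℝ) := by exact_mod_cast hL3
    have hl1 : (0 : ℝ) < (L : ℝ) - 1 := by linarith
    rw [div_le_iff₀ hl1]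
    have hrlt : L % 3 < L := by omega
    have hlr : (0 : ℝ) < (L : ℝ) - ((L % 3 : ℕ) : ℝ) := by
      have : ((L % 3 : ℕ) : ℝ) < (L : ℝ) := by exact_mod_cast hrlt
      linarith
    have hkey : (3 : ℝ) * ((L % 3 : ℕ) : ℝ)
        ≤ ((L : ℝ) - 1) * ((L : ℝ) - ((L % 3 : ℕ) : ℝ)) := by
      have hnat := nat_key L h2 hL3
      have hc : ((3 * (L % 3) : ℕ) : ℝ) ≤ (((L - 1) * (L - L % 3) : ℕ) : ℝ) :=
        Nat.cast_le.mpr hnat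
      rw [Nat.cast_mul, Nat.cast_mul, Nat.cast_sub (by omega : 1 ≤ L),
        Nat.cast_sub (Nat.mod_le L 3)] at hc
      simpa using hc
    have h5 : 3 * lamj * ((L : ℝ) - ((L % 3 : ℕ) : ℝ))
        ≤ ((L : ℝ) - 1) * lam3 * ((L : ℝ) - ((L % 3 : ℕ) : ℝ)) := by
      nlinarith [mul_le_mul_of_nonneg_right hkey h3, hA]
    have h6 : 3 * lamj ≤ ((L : ℝ) - 1) * lam3 := le_of_mul_le_mul_right h5 hlr
    nlinarith [h6]

lemma mem_dil3_aux {n : ℕ} (u : Fin 4 → Fin n → ℤ) (i : Fin 4) (hi : i ≠ 3)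
    (hmod : ∀ j, j ≠ i → j ≠ 3 → rmod u i j 3 = 0 ∧ 0 < latLen u i j)
    (hL3 : 3 ≤ latLen u i 3)
    (lam : Fin 4 → ℝ) (h0 : ∀ j, 0 ≤ lam j) (h1 : ∑ j, lam j = 1)
    (hC : (rmod u i 3 3 : ℝ) * lam 3
        ≤ ((latLen u i 3 : ℝ) - (rmod u i 3 3 : ℝ)) * lam i) :
    ∑ j, lam j • toR (u j) ∈ dil u i 3 := by
  classical
  have hr3 : rmod u i 3 3 < 3 := Nat.mod_lt _ (by norm_num)
  refine sum_mem_dil u i 3 ?_ lam h0 h1 ?_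
  · intro j hj
    by_cases hj3 : j = 3
    · subst hj3
      have ha : (rmod u i 3 3 : ℝ) < 3 := by exact_mod_cast hr3
      have hb : (3 : ℝ) ≤ (latLen u i 3 : ℝ) := by exact_mod_cast hL3
      linarith
    · obtain ⟨hm, hpos⟩ := hmod j hj hj3
      rw [hm]
      have : (0:ℝ) < (latLen u i j : ℝ) := by exact_mod_cast hpos
      simpa using this
  · have h3mem : (3 : Fin 4) ∈ Finset.univ.erase i :=
      Finset.mem_erase.mpr ⟨Ne.symm hi, Finset.mem_univ _⟩
    rw [← Finset.add_sum_erase _ _ h3mem]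
    have heq : ∑ j ∈ (Finset.univ.erase i).erase 3,
          lam j * (latLen u i j : ℝ) / ((latLen u i j : ℝ) - (rmod u i j 3 : ℝ))
        = ∑ j ∈ (Finset.univ.erase i).erase 3, lam j := by
      apply Finset.sum_congr rfl
      intro j hj
      have hj3 : j ≠ 3 := (Finset.mem_erase.mp hj).1
      have hji : j ≠ i := (Finset.mem_erase.mp (Finset.mem_erase.mp hj).2).1
      obtain ⟨hm, hpos⟩ := hmod j hji hj3
      have hl : (latLen u i j : ℝ) ≠ 0 := Nat.cast_ne_zero.mpr (by omega)
      rw [hm, Nat.cast_zero, sub_zero, mul_div_assoc, div_self hl, mul_one]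
    rw [heq]
    have e2 : lam 3 + ∑ j ∈ (Finset.univ.erase i).erase 3, lam j
        = ∑ j ∈ Finset.univ.erase i, lam j := Finset.add_sum_erase _ lam h3mem
    have e3 : lam i + ∑ j ∈ Finset.univ.erase i, lam j = 1 := by
      rw [Finset.add_sum_erase _ lam (Finset.mem_univ i)]; exact h1
    have hlr : (0:ℝ) < (latLen u i 3 : ℝ) - (rmod u i 3 3 : ℝ) := by
      have ha : (rmod u i 3 3 : ℝ) < 3 := by exact_mod_cast hr3
      have hb : (3 : ℝ) ≤ (latLen u i 3 : ℝ) := by exact_mod_cast hL3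
      linarith
    have hb : lam 3 * (latLen u i 3 : ℝ) / ((latLen u i 3 : ℝ) - (rmod u i 3 3 : ℝ))
        ≤ lam 3 + lam i := by
      rw [div_le_iff₀ hlr]
      nlinarith [hC]
    linarith

/-- in dimension 3, if `l_{01} = l_{02} = 3` and `l_{03}` is odd, and
`S = {i ∈ {0,1,2} : l_{i3} ≠ 2}`, then the dilations `P_{i,3}` for `i ∈ S` are defined
(in particular `3 ∣ l_{12}`, `l_{03} ≥ 3`, and `l_{i3} ≥ 3` for `i ∈ S`), and
`P = (⋃_{i∈S} P_{i,3}) ∪ P_{3,2}`. -/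
theorem dim3_special_case
    (u : Fin 4 → Fin 3 → ℤ)
    (hind : AffineIndependent ℝ fun i => toR (u i))
    (hlen : ∀ i j, i ≠ j → 2 ≤ latLen u i j)
    (h01 : latLen u 0 1 = 3) (h02 : latLen u 0 2 = 3)
    (h03 : Odd (latLen u 0 3))
    (S : Set (Fin 4))
    (hS : S = {i : Fin 4 | i ≠ 3 ∧ latLen u i 3 ≠ 2}) :
    3 ∣ latLen u 1 2 ∧
    3 ≤ latLen u 0 3 ∧
    (∀ i ∈ S, 3 ≤ latLen u i 3) ∧
    (∀ i ∈ S, ∀ j, j ≠ i → 3 ≤ latLen u i j) ∧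
    lsimplex u = (⋃ i ∈ S, dil u i 3) ∪ dil u 3 2 := by
  classical
  have hd1 : ∀ x, (3:ℤ) ∣ (u 1 x - u 0 x) := by
    intro x
    have h := Finset.gcd_dvd (f := fun x => (u 1 x - u 0 x).natAbs) (Finset.mem_univ x)
    rw [show (Finset.univ.gcd fun x => (u 1 x - u 0 x).natAbs) = 3 from h01] at h
    exact_mod_cast Int.natCast_dvd.mpr h
  have hd2 : ∀ x, (3:ℤ) ∣ (u 2 x - u 0 x) := by
    intro x
    have h := Finset.gcd_dvd (f := fun x => (u 2 x - u 0 x).natAbs) (Finset.mem_univ x)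
    rw [show (Finset.univ.gcd fun x => (u 2 x - u 0 x).natAbs) = 3 from h02] at h
    exact_mod_cast Int.natCast_dvd.mpr h
  have part1 : 3 ∣ latLen u 1 2 := by
    apply Finset.dvd_gcd
    intro x _
    have h3 : (3:ℤ) ∣ (u 2 x - u 1 x) := by
      have ha := hd1 x; have hb := hd2 x; omega
    exact Int.natCast_dvd.mp (by exact_mod_cast h3)
  obtain ⟨k12, hk12⟩ := part1
  have h03' : 2 ≤ latLen u 0 3 := hlen 0 3 (by decide)
  have hodd03 : latLen u 0 3 % 2 = 1 := Nat.odd_iff.mp h03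
  have part2 : 3 ≤ latLen u 0 3 := by omega
  have hSmem : ∀ i : Fin 4, i ∈ S ↔ (i ≠ 3 ∧ latLen u i 3 ≠ 2) := by
    intro i; rw [hS]; exact Iff.rfl
  have part3 : ∀ i ∈ S, 3 ≤ latLen u i 3 := by
    intro i hi
    obtain ⟨hi3, hne⟩ := (hSmem i).mp hi
    have := hlen i 3 hi3
    omega
  have l12ge : 3 ≤ latLen u 1 2 := by
    have := hlen 1 2 (by decide); omega
  have h10 : latLen u 1 0 = 3 := (latLen_comm u 1 0).trans h01
  have h20 : latLen u 2 0 = 3 := (latLen_comm u 2 0).trans h02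
  have h21 : 3 ≤ latLen u 2 1 := (latLen_comm u 2 1) ▸ l12ge
  have part4 : ∀ i ∈ S, ∀ j, j ≠ i → 3 ≤ latLen u i j := by
    intro i hi j hj
    obtain ⟨hi3, hne⟩ := (hSmem i).mp hi
    have hii : 3 ≤ latLen u i 3 := part3 i hi
    fin_cases i <;> fin_cases j <;>
      first
      | exact absurd rfl hj
      | exact absurd rfl hi3
      | exact le_of_eq h01.symm
      | exact le_of_eq h02.symm
      | exact le_of_eq h10.symm
      | exact le_of_eq h20.symm
      | exact part2
      | exact l12ge
      | exact h21
      | exact hii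
  refine ⟨⟨k12, hk12⟩, part2, part3, part4, ?_⟩
  -- helper residues
  have hr01 : rmod u 0 1 3 = 0 := by show latLen u 0 1 % 3 = 0; rw [h01]
  have hr02 : rmod u 0 2 3 = 0 := by show latLen u 0 2 % 3 = 0; rw [h02]
  have hr10 : rmod u 1 0 3 = 0 := by show latLen u 1 0 % 3 = 0; rw [h10]
  have hr12 : rmod u 1 2 3 = 0 := by show latLen u 1 2 % 3 = 0; omega
  have hr20 : rmod u 2 0 3 = 0 := by show latLen u 2 0 % 3 = 0; rw [h20]
  have hr21 : rmod u 2 1 3 = 0 := by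
    show latLen u 2 1 % 3 = 0
    have := latLen_comm u 2 1
    omega
  ext x
  simp only [Set.mem_union, Set.mem_iUnion]
  constructor
  · intro hx
    rw [lsimplex, convexHull_range_eq_exists_affineCombination] at hx
    obtain ⟨s, w, hw0, hw1, hws⟩ := hx
    set lam : Fin 4 → ℝ := fun j => if j ∈ s then w j else 0 with hlam
    have h0 : ∀ j, 0 ≤ lam j := by
      intro j; rw [hlam]; dsimp only; split
      · exact hw0 j ‹_›
      · exact le_refl 0
    have h1 : ∑ j, lam j = 1 := by
      rw [hlam]; dsimp only
      rw [Finset.sum_ite_mem, Finset.univ_inter]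
      exact hw1
    have hxeq : x = ∑ j, lam j • toR (u j) := by
      rw [← hws, Finset.affineCombination_eq_linear_combination s _ _ hw1]
      rw [hlam]; dsimp only
      rw [show (∑ j : Fin 4, (if j ∈ s then w j else 0) • toR (u j))
            = ∑ j : Fin 4, (if j ∈ s then w j • toR (u j) else 0) from
          Finset.sum_congr rfl fun j _ => by split <;> simp]
      rw [Finset.sum_ite_mem, Finset.univ_inter]
    have hS0 : (0 : Fin 4) ∈ S := (hSmem 0).mpr ⟨by decide, by omega⟩
    by_cases hc0 : (rmod u 0 3 3 : ℝ) * lam 3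
        ≤ ((latLen u 0 3 : ℝ) - (rmod u 0 3 3 : ℝ)) * lam 0
    · left
      refine ⟨0, hS0, ?_⟩
      rw [hxeq]
      refine mem_dil3_aux u 0 (by decide) ?_ part2 lam h0 h1 hc0
      intro j hj0 hj3
      fin_cases j
      · exact absurd rfl hj0
      · exact ⟨hr01, (by rw [h01]; norm_num : 0 < latLen u 0 1)⟩
      · exact ⟨hr02, (by rw [h02]; norm_num : 0 < latLen u 0 2)⟩
      · exact absurd rfl hj3
    by_cases hc1 : latLen u 1 3 ≠ 2 ∧ (rmod u 1 3 3 : ℝ) * lam 3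
        ≤ ((latLen u 1 3 : ℝ) - (rmod u 1 3 3 : ℝ)) * lam 1
    · left
      have hS1 : (1 : Fin 4) ∈ S := (hSmem 1).mpr ⟨by decide, hc1.1⟩
      refine ⟨1, hS1, ?_⟩
      rw [hxeq]
      refine mem_dil3_aux u 1 (by decide) ?_ (part3 1 hS1) lam h0 h1 hc1.2
      intro j hj1 hj3
      fin_cases j
      · exact ⟨hr10, (by rw [h10]; norm_num : 0 < latLen u 1 0)⟩
      · exact absurd rfl hj1
      · exact ⟨hr12, (by omega : 0 < latLen u 1 2)⟩
      · exact absurd rfl hj3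
    by_cases hc2 : latLen u 2 3 ≠ 2 ∧ (rmod u 2 3 3 : ℝ) * lam 3
        ≤ ((latLen u 2 3 : ℝ) - (rmod u 2 3 3 : ℝ)) * lam 2
    · left
      have hS2 : (2 : Fin 4) ∈ S := (hSmem 2).mpr ⟨by decide, hc2.1⟩
      refine ⟨2, hS2, ?_⟩
      rw [hxeq]
      refine mem_dil3_aux u 2 (by decide) ?_ (part3 2 hS2) lam h0 h1 hc2.2
      intro j hj2 hj3
      fin_cases j
      · exact ⟨hr20, (by rw [h20]; norm_num : 0 < latLen u 2 0)⟩
      · exact ⟨hr21, (by have := latLen_comm u 2 1; omega : 0 < latLen u 2 1)⟩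
      · exact absurd rfl hj2
      · exact absurd rfl hj3
    · right
      rw [hxeq]
      refine sum_mem_dil u 3 2 ?_ lam h0 h1 ?_
      · intro j hj
        have h2L := hlen 3 j (Ne.symm hj)
        exact_mod_cast (show latLen u 3 j % 2 < latLen u 3 j by omega :
          rmod u 3 j 2 < latLen u 3 j)
      · have hers : (Finset.univ.erase (3 : Fin 4)) = {0, 1, 2} := by decide
        rw [hers, Finset.sum_insert (by decide), Finset.sum_insert (by decide),
          Finset.sum_singleton]
        have e30 : latLen u 3 0 = latLen u 0 3 := latLen_comm u 3 0
        have e31 : latLen u 3 1 = latLen u 1 3 := latLen_comm u 3 1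
        have e32 : latLen u 3 2 = latLen u 2 3 := latLen_comm u 3 2
        have b0 : lam 0 * (latLen u 3 0 : ℝ)
            / ((latLen u 3 0 : ℝ) - ((latLen u 3 0 % 2 : ℕ) : ℝ)) ≤ lam 0 + lam 3 / 3 := by
          refine perj (latLen u 3 0) (hlen 3 0 (by decide)) (lam 0) (lam 3) (h0 0) (h0 3) ?_
          intro _
          rw [e30]
          exact ⟨part2, (not_le.mp hc0).le⟩
        have b1 : lam 1 * (latLen u 3 1 : ℝ)
            / ((latLen u 3 1 : ℝ) - ((latLen u 3 1 % 2 : ℕ) : ℝ)) ≤ lam 1 + lam 3 / 3 := by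
          refine perj (latLen u 3 1) (hlen 3 1 (by decide)) (lam 1) (lam 3) (h0 1) (h0 3) ?_
          intro hodd2
          rw [e31] at hodd2 ⊢
          have hne2 : latLen u 1 3 ≠ 2 := by omega
          have hnc1 : ¬ ((rmod u 1 3 3 : ℝ) * lam 3
              ≤ ((latLen u 1 3 : ℝ) - (rmod u 1 3 3 : ℝ)) * lam 1) :=
            fun hC => hc1 ⟨hne2, hC⟩
          have hge := hlen 1 3 (by decide)
          exact ⟨by omega, (not_le.mp hnc1).le⟩
        have b2 : lam 2 * (latLen u 3 2 : ℝ)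
            / ((latLen u 3 2 : ℝ) - ((latLen u 3 2 % 2 : ℕ) : ℝ)) ≤ lam 2 + lam 3 / 3 := by
          refine perj (latLen u 3 2) (hlen 3 2 (by decide)) (lam 2) (lam 3) (h0 2) (h0 3) ?_
          intro hodd2
          rw [e32] at hodd2 ⊢
          have hne2 : latLen u 2 3 ≠ 2 := by omega
          have hnc2 : ¬ ((rmod u 2 3 3 : ℝ) * lam 3
              ≤ ((latLen u 2 3 : ℝ) - (rmod u 2 3 3 : ℝ)) * lam 2) :=
            fun hC => hc2 ⟨hne2, hC⟩
          have hge := hlen 2 3 (by decide)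
          exact ⟨by omega, (not_le.mp hnc2).le⟩
        have hsum4 : lam 0 + lam 1 + lam 2 + lam 3 = 1 := by
          rw [← Fin.sum_univ_four lam]; exact h1
        exact le_trans (add_le_add b0 (add_le_add b1 b2)) (by linarith)
  · intro h
    rcases h with ⟨i, hiS, hmem⟩ | h
    · exact dil_subset u i 3 (fun j hj => by have := hlen i j (Ne.symm hj); omega) hmem
    · exact dil_subset u 3 2 (fun j hj => by have := hlen 3 j (Ne.symm hj); omega) h
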